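/- (Three-party qubit Werner state joinability) Three qubit Werner states with parameters (η_AB, η_AC, η_BC) admit a joint three-qubit state w ≥ 0, invariant under U⊗U⊗U and with reduced states Tr_C(w), Tr_B(w), Tr_A(w) equal to the Werner states ρ(η_AB), ρ(η_AC), ρ(η_BC) respectively, if and only if (1/2)(1 − η_AB − η_AC − η_BC) ≥ |η_AB + ω η_AC + ω² η_BC| with ω = e^{2πi/3}, and η_AB + η_AC + η_BC ≥ −1. -/

import Mathlib

open Matrix Kronecker BigOperators
open scoped ComplexOrder

/-- The swap operator on `C² ⊗ C²`. -/
noncomputable def swapOp2 : Matrix (Fin 2 × Fin 2) (Fin 2 × Fin 2) ℂ :=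
  fun p q => if p.1 = q.2 ∧ p.2 = q.1 then 1 else 0

/-- Qubit Werner state `ρ(η) = (1−η) I/4 + η V/2`. -/
noncomputable def werner2 (η : ℝ) : Matrix (Fin 2 × Fin 2) (Fin 2 × Fin 2) ℂ :=
  ((1 - η) / 4) • (1 : Matrix (Fin 2 × Fin 2) (Fin 2 × Fin 2) ℂ) + (η / 2) • swapOp2

abbrev Tri := Fin 2 × Fin 2 × Fin 2

/-- Partial trace over the third qubit. -/
noncomputable def trC (w : Matrix Tri Tri ℂ) : Matrix (Fin 2 × Fin 2) (Fin 2 × Fin 2) ℂ :=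
  fun p q => ∑ m : Fin 2, w (p.1, p.2, m) (q.1, q.2, m)

/-- Partial trace over the second qubit. -/
noncomputable def trB (w : Matrix Tri Tri ℂ) : Matrix (Fin 2 × Fin 2) (Fin 2 × Fin 2) ℂ :=
  fun p q => ∑ m : Fin 2, w (p.1, m, p.2) (q.1, m, q.2)

/-- Partial trace over the first qubit. -/
noncomputable def trA (w : Matrix Tri Tri ℂ) : Matrix (Fin 2 × Fin 2) (Fin 2 × Fin 2) ℂ :=
  fun p q => ∑ m : Fin 2, w (m, p.1, p.2) (m, q.1, q.2)

/-- `U ⊗ U ⊗ U` for a single-qubit unitary `U`. -/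
noncomputable def triple (U : Matrix (Fin 2) (Fin 2) ℂ) : Matrix Tri Tri ℂ :=
  U ⊗ₖ (U ⊗ₖ U)

namespace Aux14

noncomputable def pm (σ : Tri → Tri) : Matrix Tri Tri ℂ := fun p q => if q = σ p then 1 else 0

def s12 : Tri → Tri := fun p => (p.2.1, p.1, p.2.2)
def s13 : Tri → Tri := fun p => (p.2.2, p.2.1, p.1)
def s23 : Tri → Tri := fun p => (p.1, p.2.2, p.2.1)
def c1 : Tri → Tri := fun p => (p.2.1, p.2.2, p.1)
def c2 : Tri → Tri := fun p => (p.2.2, p.1, p.2.1)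

lemma pm_mul (σ τ : Tri → Tri) : pm σ * pm τ = pm (τ ∘ σ) := by
  ext p r
  rw [Matrix.mul_apply, Finset.sum_eq_single (σ p)]
  · simp [pm]
  · intro b _ hb; simp [pm, hb]
  · simp

lemma pm_id : pm id = (1 : Matrix Tri Tri ℂ) := by
  ext p q
  simp [pm, Matrix.one_apply, eq_comm]

lemma pm_mul_right (σ : Tri → Tri) (hσ : ∀ p, σ (σ p) = p) (T : Matrix Tri Tri ℂ) :
    T * pm σ = fun p r => T p (σ r) := by
  ext p r
  rw [Matrix.mul_apply, Finset.sum_eq_single (σ r)]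
  · simp [pm, hσ]
  · intro b _ hb
    have : r ≠ σ b := fun h => hb (by rw [h, hσ])
    simp [pm, this]
  · simp

lemma pm_conjT (σ : Tri → Tri) (hσ : ∀ p, σ (σ p) = p) : (pm σ)ᴴ = pm σ := by
  ext p q
  have h2 : (p = σ q) ↔ (q = σ p) := ⟨fun h => by rw [h, hσ], fun h => by rw [h, hσ]⟩
  by_cases h : q = σ p <;> simp [pm, Matrix.conjTranspose_apply, h2, h, hσ]

lemma qubit_rel : pm c1 + pm c2 = pm s12 + pm s13 + pm s23 - 1 := by
  ext ⟨a, b, c⟩ ⟨d, e, f⟩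
  fin_cases a <;> fin_cases b <;> fin_cases c <;> fin_cases d <;> fin_cases e <;> fin_cases f <;>
    simp [pm, s12, s13, s23, c1, c2, Matrix.one_apply, Prod.ext_iff] <;> norm_num

lemma hc1 : pm c1 = pm s12 + pm s13 + pm s23 - 1 - pm c2 := by
  have := qubit_rel; linear_combination (norm := module) this

noncomputable def bigS : Matrix Tri Tri ℂ := pm s12 + pm s13 + pm s23

noncomputable def wmat (η1 η2 η3 : ℝ) : Matrix Tri Tri ℂ :=
  (((1 - (η1+η2+η3))/8 : ℝ) : ℂ) • 1 + ((η1/4 : ℝ) : ℂ) • pm s12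
    + ((η2/4 : ℝ) : ℂ) • pm s13 + ((η3/4 : ℝ) : ℂ) • pm s23

noncomputable def Gm (η1 η2 η3 : ℝ) : Matrix Tri Tri ℂ :=
  wmat η1 η2 η3 - (((1 + (η1+η2+η3))/24 : ℝ) : ℂ) • bigS

noncomputable def Amat (x y z : ℝ) : Matrix Tri Tri ℂ :=
  (1 : Matrix Tri Tri ℂ) - (1/3 : ℂ) • bigS - ((2*x/3 : ℝ) : ℂ) • pm s12
    - ((2*y/3 : ℝ) : ℂ) • pm s13 - ((2*z/3 : ℝ) : ℂ) • pm s23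

section bigidentities

lemma I1 (η1 η2 η3 : ℝ) :
    Gm η1 η2 η3 * Gm η1 η2 η3 =
      ((2 * ((1 - (η1+η2+η3))/8) : ℝ) : ℂ) • Gm η1 η2 η3 +
      ((((η1^2+η2^2+η3^2 - (η1*η2+η1*η3+η2*η3))/16) - ((1 - (η1+η2+η3))/8)^2 : ℝ) : ℂ) •
        ((1 : Matrix Tri Tri ℂ) - (1/3 : ℂ) • bigS) := by
  have h1 : (1 : Matrix Tri Tri ℂ) = pm id := pm_id.symm
  simp only [Gm, wmat, bigS]
  rw [h1]
  simp only [smul_sub, smul_add, sub_mul, mul_sub, add_mul, mul_add, smul_mul_assoc,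
    mul_smul_comm, pm_mul, smul_smul]
  have e1 : ∀ σ : Tri → Tri, σ ∘ id = σ := fun _ => rfl
  have e2 : ∀ σ : Tri → Tri, id ∘ σ = σ := fun _ => rfl
  simp only [e1, e2]
  have t1 : pm (s12 ∘ s12) = pm id := rfl
  have t2 : pm (s13 ∘ s13) = pm id := rfl
  have t3 : pm (s23 ∘ s23) = pm id := rfl
  have t4 : pm (s12 ∘ s13) = pm c1 := rfl
  have t5 : pm (s13 ∘ s12) = pm c2 := rfl
  have t6 : pm (s12 ∘ s23) = pm c2 := rfl
  have t7 : pm (s23 ∘ s12) = pm c1 := rfl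
  have t8 : pm (s13 ∘ s23) = pm c1 := rfl
  have t9 : pm (s23 ∘ s13) = pm c2 := rfl
  rw [t1, t2, t3, t4, t5, t6, t7, t8, t9, hc1, ← h1]
  match_scalars <;> push_cast <;> ring

lemma I2 (x y z : ℝ) (hs : x + y + z = 0) (hq : x^2 + y^2 + z^2 = 3/2) :
    Amat x y z * Amat x y z = (2 : ℂ) • Amat x y z := by
  have hsc : (x:ℂ) + y + z = 0 := by exact_mod_cast congrArg (Complex.ofReal) hs
  have hqc : (x:ℂ)^2 + y^2 + z^2 = 3/2 := by
    have h' : ((x^2+y^2+z^2 : ℝ) : ℂ) = ((3/2:ℝ) : ℂ) := by rw [hq]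
    push_cast at h'; exact h'
  have h1 : (1 : Matrix Tri Tri ℂ) = pm id := pm_id.symm
  simp only [Amat, bigS]
  rw [h1]
  simp only [smul_sub, smul_add, sub_mul, mul_sub, add_mul, mul_add, smul_mul_assoc,
    mul_smul_comm, pm_mul, smul_smul]
  have e1 : ∀ σ : Tri → Tri, σ ∘ id = σ := fun _ => rfl
  have e2 : ∀ σ : Tri → Tri, id ∘ σ = σ := fun _ => rfl
  simp only [e1, e2]
  have t1 : pm (s12 ∘ s12) = pm id := rfl
  have t2 : pm (s13 ∘ s13) = pm id := rfl
  have t3 : pm (s23 ∘ s23) = pm id := rfl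
  have t4 : pm (s12 ∘ s13) = pm c1 := rfl
  have t5 : pm (s13 ∘ s12) = pm c2 := rfl
  have t6 : pm (s12 ∘ s23) = pm c2 := rfl
  have t7 : pm (s23 ∘ s12) = pm c1 := rfl
  have t8 : pm (s13 ∘ s23) = pm c1 := rfl
  have t9 : pm (s23 ∘ s13) = pm c2 := rfl
  rw [t1, t2, t3, t4, t5, t6, t7, t8, t9, hc1, ← h1]
  match_scalars
  · linear_combination (2/3 : ℂ)*hqc - (2/9 : ℂ)*((x:ℂ)+y+z)*hsc
  · linear_combination ((4/9 : ℂ) + (2/9 : ℂ)*((x:ℂ)+y+z))*hsc - (2/9 : ℂ)*hqc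
  · linear_combination ((4/9 : ℂ) + (2/9 : ℂ)*((x:ℂ)+y+z))*hsc - (2/9 : ℂ)*hqc
  · linear_combination ((4/9 : ℂ) + (2/9 : ℂ)*((x:ℂ)+y+z))*hsc - (2/9 : ℂ)*hqc
  · ring

lemma SS : bigS * bigS = (3 : ℂ) • bigS := by
  have h1 : (1 : Matrix Tri Tri ℂ) = pm id := pm_id.symm
  simp only [bigS]
  simp only [add_mul, mul_add, pm_mul]
  have t1 : pm (s12 ∘ s12) = pm id := rfl
  have t2 : pm (s13 ∘ s13) = pm id := rfl
  have t3 : pm (s23 ∘ s23) = pm id := rfl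
  have t4 : pm (s12 ∘ s13) = pm c1 := rfl
  have t5 : pm (s13 ∘ s12) = pm c2 := rfl
  have t6 : pm (s12 ∘ s23) = pm c2 := rfl
  have t7 : pm (s23 ∘ s12) = pm c1 := rfl
  have t8 : pm (s13 ∘ s23) = pm c1 := rfl
  have t9 : pm (s23 ∘ s13) = pm c2 := rfl
  rw [t1, t2, t3, t4, t5, t6, t7, t8, t9, hc1, ← h1]
  match_scalars <;> ring

lemma Q2 : ((1 : Matrix Tri Tri ℂ) - ((1/3 : ℝ) : ℂ) • bigS) *
    ((1 : Matrix Tri Tri ℂ) - ((1/3 : ℝ) : ℂ) • bigS)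
      = (1 : Matrix Tri Tri ℂ) - ((1/3 : ℝ) : ℂ) • bigS := by
  have := SS
  simp only [sub_mul, mul_sub, one_mul, mul_one, smul_mul_assoc, mul_smul_comm, this, smul_smul]
  match_scalars <;> push_cast <;> ring

end bigidentities

section psd

lemma psd_add {M N : Matrix Tri Tri ℂ} (hM : M.PosSemidef) (hN : N.PosSemidef) :
    (M + N).PosSemidef := by
  refine ⟨hM.1.add hN.1, fun x => ?_⟩
  exact (hM.add hN).2 x

lemma psd_smul {M : Matrix Tri Tri ℂ} (hM : M.PosSemidef) {r : ℝ} (hr : 0 ≤ r) :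
    (((r : ℝ) : ℂ) • M).PosSemidef := by
  constructor
  · unfold Matrix.IsHermitian
    rw [Matrix.conjTranspose_smul, hM.1.eq, Complex.star_def, Complex.conj_ofReal]
  · intro x
    exact (hM.smul (Complex.zero_le_real.mpr hr)).2 x

lemma psd_trace_nonneg {M : Matrix Tri Tri ℂ} (hM : M.PosSemidef) : 0 ≤ M.trace := by
  exact hM.trace_nonneg

open scoped MatrixOrder Matrix.Norms.L2Operator in
lemma psd_trace_mul_nonneg {M A : Matrix Tri Tri ℂ} (hM : M.PosSemidef) (hA : A.PosSemidef) :
    0 ≤ (M * A).trace := by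
  obtain ⟨B, rfl⟩ := CStarAlgebra.nonneg_iff_eq_star_mul_self.mp hA.nonneg
  rw [← Matrix.mul_assoc, Matrix.trace_mul_comm, ← Matrix.mul_assoc]
  exact psd_trace_nonneg (hM.mul_mul_conjTranspose_same B)

lemma herm_S : bigSᴴ = bigS := by
  simp only [bigS, Matrix.conjTranspose_add, pm_conjT s12 (fun p => rfl),
    pm_conjT s13 (fun p => rfl), pm_conjT s23 (fun p => rfl)]

lemma psd_S : bigS.PosSemidef := by
  have h := psd_smul (Matrix.posSemidef_conjTranspose_mul_self bigS)
    (by norm_num : (0:ℝ) ≤ 1/3)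
  rwa [herm_S, SS, smul_smul, show (((1/3 : ℝ) : ℂ)) * 3 = 1 by push_cast; ring, one_smul] at h

end psd

section omega

lemma om_val : Complex.exp (2 * Real.pi * Complex.I / 3)
    = Complex.ofReal (-(1/2)) + Complex.ofReal (Real.sqrt 3 / 2) * Complex.I := by
  have h : (2 * (Real.pi:ℂ) * Complex.I / 3) = ((2 * Real.pi / 3 : ℝ) : ℂ) * Complex.I := by
    push_cast; ring
  have hc : Real.cos (2 * Real.pi / 3) = -(1/2) := by
    rw [show (2 * Real.pi / 3 : ℝ) = Real.pi - Real.pi/3 by ring, Real.cos_pi_sub,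
      Real.cos_pi_div_three]
  have hs : Real.sin (2 * Real.pi / 3) = Real.sqrt 3 / 2 := by
    rw [show (2 * Real.pi / 3 : ℝ) = Real.pi - Real.pi/3 by ring, Real.sin_pi_sub,
      Real.sin_pi_div_three]
  rw [h, Complex.exp_mul_I, ← Complex.ofReal_cos, ← Complex.ofReal_sin, hc, hs]

lemma zre (η1 η2 η3 : ℝ) :
    ((η1:ℂ) + Complex.exp (2 * Real.pi * Complex.I / 3) * η2
      + Complex.exp (2 * Real.pi * Complex.I / 3)^2 * η3).re = η1 - η2/2 - η3/2 := by
  simp [om_val, Complex.add_re, Complex.mul_re, Complex.mul_im, pow_two]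
  have h3sq : Real.sqrt 3 ^ 2 = 3 := Real.sq_sqrt (by norm_num)
  ring_nf
  linear_combination (-(η3)/4) * h3sq

lemma zim (η1 η2 η3 : ℝ) :
    ((η1:ℂ) + Complex.exp (2 * Real.pi * Complex.I / 3) * η2
      + Complex.exp (2 * Real.pi * Complex.I / 3)^2 * η3).im
      = (Real.sqrt 3 / 2) * (η2 - η3) := by
  simp [om_val, Complex.add_im, Complex.mul_re, Complex.mul_im, pow_two]
  ring_nf

lemma habs2 (η1 η2 η3 : ℝ) :
    (‖(η1:ℂ) + Complex.exp (2 * Real.pi * Complex.I / 3) * η2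
      + Complex.exp (2 * Real.pi * Complex.I / 3)^2 * η3‖)^2
      = (η1^2+η2^2+η3^2) - (η1*η2+η1*η3+η2*η3) := by
  rw [Complex.sq_norm, Complex.normSq_apply, zre, zim]
  have h3sq : Real.sqrt 3 ^ 2 = 3 := Real.sq_sqrt (by norm_num)
  linear_combination ((η2-η3)^2/4) * h3sq

end omega

section witness

lemma trC_w (η1 η2 η3 : ℝ) : trC (wmat η1 η2 η3) = werner2 η1 := by
  ext ⟨a, b⟩ ⟨d, e⟩
  fin_cases a <;> fin_cases b <;> fin_cases d <;> fin_cases e <;>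
    simp [trC, wmat, pm, werner2, swapOp2, s12, s13, s23, Matrix.one_apply,
      Fin.sum_univ_two, Prod.ext_iff] <;> push_cast <;> ring

lemma trB_w (η1 η2 η3 : ℝ) : trB (wmat η1 η2 η3) = werner2 η2 := by
  ext ⟨a, b⟩ ⟨d, e⟩
  fin_cases a <;> fin_cases b <;> fin_cases d <;> fin_cases e <;>
    simp [trB, wmat, pm, werner2, swapOp2, s12, s13, s23, Matrix.one_apply,
      Fin.sum_univ_two, Prod.ext_iff] <;> push_cast <;> ring

lemma trA_w (η1 η2 η3 : ℝ) : trA (wmat η1 η2 η3) = werner2 η3 := by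
  ext ⟨a, b⟩ ⟨d, e⟩
  fin_cases a <;> fin_cases b <;> fin_cases d <;> fin_cases e <;>
    simp [trA, wmat, pm, werner2, swapOp2, s12, s13, s23, Matrix.one_apply,
      Fin.sum_univ_two, Prod.ext_iff] <;> push_cast <;> ring

lemma trace_w (η1 η2 η3 : ℝ) : (wmat η1 η2 η3).trace = 1 := by
  simp [Matrix.trace, wmat, pm, s12, s13, s23, Matrix.diag, Fintype.sum_prod_type,
    Fin.sum_univ_two, Matrix.one_apply, Prod.ext_iff]
  push_cast; ring

lemma comm_w (η1 η2 η3 : ℝ) (U : Matrix (Fin 2) (Fin 2) ℂ) :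
    triple U * wmat η1 η2 η3 = wmat η1 η2 η3 * triple U := by
  have key : ∀ σ : Tri → Tri, (∀ p, σ (σ p) = p) →
      (∀ (p r : Tri), triple U (σ p) r = triple U p (σ r)) →
      triple U * pm σ = pm σ * triple U := by
    intro σ hσ hsymm
    ext p r
    rw [Matrix.mul_apply, Finset.sum_eq_single (σ r), Matrix.mul_apply,
      Finset.sum_eq_single (σ p)]
    · simp [pm, hσ, hsymm p r]
    · intro b _ hb; simp [pm, hb]
    · simp
    · intro b _ hb
      have : r ≠ σ b := fun h => hb (by rw [h, hσ])
      simp [pm, this]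
    · simp
  simp only [wmat, Matrix.mul_add, Matrix.add_mul, Matrix.mul_smul, Matrix.smul_mul,
    Matrix.mul_one, Matrix.one_mul]
  rw [key s12 (fun p => rfl)
      (by intro p r; simp only [triple, s12, Matrix.kroneckerMap_apply]; ring),
    key s13 (fun p => rfl)
      (by intro p r; simp only [triple, s13, Matrix.kroneckerMap_apply]; ring),
    key s23 (fun p => rfl)
      (by intro p r; simp only [triple, s23, Matrix.kroneckerMap_apply]; ring)]

lemma herm_w (η1 η2 η3 : ℝ) : (wmat η1 η2 η3).IsHermitian := by
  unfold Matrix.IsHermitian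
  simp only [wmat, Matrix.conjTranspose_add, Matrix.conjTranspose_smul, Matrix.conjTranspose_one,
    pm_conjT s12 (fun p => rfl), pm_conjT s13 (fun p => rfl), pm_conjT s23 (fun p => rfl),
    Complex.star_def, Complex.conj_ofReal]

lemma herm_G (η1 η2 η3 : ℝ) : (Gm η1 η2 η3)ᴴ = Gm η1 η2 η3 := by
  simp only [Gm, Matrix.conjTranspose_sub, Matrix.conjTranspose_smul, (herm_w η1 η2 η3).eq,
    herm_S, Complex.star_def, Complex.conj_ofReal]

lemma herm_A (x y z : ℝ) : (Amat x y z)ᴴ = Amat x y z := by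
  simp only [Amat, Matrix.conjTranspose_sub, Matrix.conjTranspose_smul, Matrix.conjTranspose_one,
    herm_S, pm_conjT s12 (fun p => rfl), pm_conjT s13 (fun p => rfl), pm_conjT s23 (fun p => rfl),
    Complex.star_def, Complex.conj_ofReal, map_div₀, _root_.map_one, map_ofNat]

end witness

end Aux14

open Aux14 in
set_option maxHeartbeats 1000000 in
theorem stmt14 (ηAB ηAC ηBC : ℝ) :
    (∃ w : Matrix Tri Tri ℂ,
        w.PosSemidef ∧ w.trace = 1 ∧
        (∀ U ∈ Matrix.unitaryGroup (Fin 2) ℂ, triple U * w = w * triple U) ∧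
        trC w = werner2 ηAB ∧ trB w = werner2 ηAC ∧ trA w = werner2 ηBC) ↔
      (‖(ηAB : ℂ) + Complex.exp (2 * Real.pi * Complex.I / 3) * ηAC
          + Complex.exp (2 * Real.pi * Complex.I / 3) ^ 2 * ηBC‖
          ≤ (1 / 2) * (1 - ηAB - ηAC - ηBC) ∧
        -1 ≤ ηAB + ηAC + ηBC) := by
  constructor
  · rintro ⟨w, hpsd, htr, -, hCm, hBm, hAm⟩
    -- trace pairings with the three swaps
    have hT1 : (w * pm s12).trace = (((1+3*ηAB)/2 : ℝ) : ℂ) := by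
      have h00 := congrFun (congrFun hCm ((0:Fin 2),(0:Fin 2))) ((0:Fin 2),(0:Fin 2))
      have h01 := congrFun (congrFun hCm ((0:Fin 2),(1:Fin 2))) ((1:Fin 2),(0:Fin 2))
      have h10 := congrFun (congrFun hCm ((1:Fin 2),(0:Fin 2))) ((0:Fin 2),(1:Fin 2))
      have h11 := congrFun (congrFun hCm ((1:Fin 2),(1:Fin 2))) ((1:Fin 2),(1:Fin 2))
      simp [trC, werner2, swapOp2, Matrix.one_apply, Prod.ext_iff, Fin.sum_univ_two]
        at h00 h01 h10 h11
      rw [pm_mul_right s12 (fun p => rfl)]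
      simp [Matrix.trace, Matrix.diag, Fintype.sum_prod_type, Fin.sum_univ_two, s12]
      push_cast at h00 h01 h10 h11 ⊢
      linear_combination h00 + h01 + h10 + h11
    have hT2 : (w * pm s13).trace = (((1+3*ηAC)/2 : ℝ) : ℂ) := by
      have h00 := congrFun (congrFun hBm ((0:Fin 2),(0:Fin 2))) ((0:Fin 2),(0:Fin 2))
      have h01 := congrFun (congrFun hBm ((0:Fin 2),(1:Fin 2))) ((1:Fin 2),(0:Fin 2))
      have h10 := congrFun (congrFun hBm ((1:Fin 2),(0:Fin 2))) ((0:Fin 2),(1:Fin 2))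
      have h11 := congrFun (congrFun hBm ((1:Fin 2),(1:Fin 2))) ((1:Fin 2),(1:Fin 2))
      simp [trB, werner2, swapOp2, Matrix.one_apply, Prod.ext_iff, Fin.sum_univ_two]
        at h00 h01 h10 h11
      rw [pm_mul_right s13 (fun p => rfl)]
      simp [Matrix.trace, Matrix.diag, Fintype.sum_prod_type, Fin.sum_univ_two, s13]
      push_cast at h00 h01 h10 h11 ⊢
      linear_combination h00 + h01 + h10 + h11
    have hT3 : (w * pm s23).trace = (((1+3*ηBC)/2 : ℝ) : ℂ) := by
      have h00 := congrFun (congrFun hAm ((0:Fin 2),(0:Fin 2))) ((0:Fin 2),(0:Fin 2))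
      have h01 := congrFun (congrFun hAm ((0:Fin 2),(1:Fin 2))) ((1:Fin 2),(0:Fin 2))
      have h10 := congrFun (congrFun hAm ((1:Fin 2),(0:Fin 2))) ((0:Fin 2),(1:Fin 2))
      have h11 := congrFun (congrFun hAm ((1:Fin 2),(1:Fin 2))) ((1:Fin 2),(1:Fin 2))
      simp [trA, werner2, swapOp2, Matrix.one_apply, Prod.ext_iff, Fin.sum_univ_two]
        at h00 h01 h10 h11
      rw [pm_mul_right s23 (fun p => rfl)]
      simp [Matrix.trace, Matrix.diag, Fintype.sum_prod_type, Fin.sum_univ_two, s23]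
      push_cast at h00 h01 h10 h11 ⊢
      linear_combination h00 + h01 + h10 + h11
    -- second inequality
    have hSum : -1 ≤ ηAB + ηAC + ηBC := by
      have h0 : 0 ≤ (w * bigS).trace := psd_trace_mul_nonneg hpsd psd_S
      rw [bigS, Matrix.mul_add, Matrix.mul_add, Matrix.trace_add, Matrix.trace_add,
        hT1, hT2, hT3] at h0
      have h0' : (0:ℝ) ≤ (1+3*ηAB)/2 + (1+3*ηAC)/2 + (1+3*ηBC)/2 := by exact_mod_cast h0
      linarith
    refine ⟨?_, hSum⟩
    -- choose the phase u
    set z : ℂ := (ηAB : ℂ) + Complex.exp (2 * Real.pi * Complex.I / 3) * ηAC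
          + Complex.exp (2 * Real.pi * Complex.I / 3) ^ 2 * ηBC with hz
    obtain ⟨u, hu1, huz⟩ : ∃ u : ℂ, ‖u‖ = 1 ∧
        (starRingEnd ℂ) u * z = ((‖z‖ : ℝ) : ℂ) := by
      by_cases h : z = 0
      · exact ⟨1, by simp, by simp [h]⟩
      · refine ⟨z / ‖z‖, ?_, ?_⟩
        · rw [norm_div, Complex.norm_real, Real.norm_eq_abs,
            _root_.abs_of_nonneg (norm_nonneg _),
            div_self (norm_ne_zero_iff.mpr h)]
        · have hane : ((‖z‖ : ℝ) : ℂ) ≠ 0 :=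
            Complex.ofReal_ne_zero.mpr (norm_ne_zero_iff.mpr h)
          rw [map_div₀, Complex.conj_ofReal, div_mul_eq_mul_div, mul_comm,
            Complex.mul_conj, Complex.normSq_eq_norm_sq]
          rw [div_eq_iff hane]
          push_cast
          ring
    have hn : u.re^2 + u.im^2 = 1 := by
      have h' := Complex.sq_norm u
      rw [hu1, Complex.normSq_apply] at h'
      linear_combination -h'
    have h3sq : Real.sqrt 3 ^ 2 = 3 := Real.sq_sqrt (by norm_num)
    set cx : ℝ := u.re with hcx
    set cy : ℝ := -u.re/2 + (Real.sqrt 3/2)*u.im with hcy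
    set cz : ℝ := -u.re/2 - (Real.sqrt 3/2)*u.im with hcz
    have hA2 := I2 cx cy cz (by rw [hcx, hcy, hcz]; ring)
      (by rw [hcx, hcy, hcz]; ring_nf; linear_combination (3/2)*hn + (u.im^2/2)*h3sq)
    have hApsd : (Amat cx cy cz).PosSemidef := by
      have heq : Amat cx cy cz = ((1/2 : ℝ) : ℂ) • ((Amat cx cy cz)ᴴ * Amat cx cy cz) := by
        rw [herm_A, hA2, smul_smul]
        norm_num
      rw [heq]
      exact psd_smul (Matrix.posSemidef_conjTranspose_mul_self _) (by norm_num)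
    have h0 : 0 ≤ (w * Amat cx cy cz).trace := psd_trace_mul_nonneg hpsd hApsd
    have hTA : (w * Amat cx cy cz).trace
        = (((1 - (ηAB+ηAC+ηBC))/2 - (cx*ηAB + cy*ηAC + cz*ηBC)
            - (cx + cy + cz)/3 : ℝ) : ℂ) := by
      simp only [Amat, bigS, Matrix.mul_sub, Matrix.mul_add, Matrix.mul_smul, Matrix.mul_one,
        Matrix.trace_sub, Matrix.trace_add, Matrix.trace_smul, hT1, hT2, hT3, htr,
        smul_eq_mul]
      push_cast
      ring
    rw [hTA] at h0
    have h0' : (0:ℝ) ≤ (1 - (ηAB+ηAC+ηBC))/2 - (cx*ηAB + cy*ηAC + cz*ηBC)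
        - (cx + cy + cz)/3 := by exact_mod_cast h0
    have hdot : cx*ηAB + cy*ηAC + cz*ηBC = ‖z‖ := by
      have h5 := congrArg Complex.re huz
      simp only [Complex.mul_re, Complex.conj_re, Complex.conj_im, Complex.ofReal_re] at h5
      rw [hz] at h5
      rw [zre ηAB ηAC ηBC, zim ηAB ηAC ηBC] at h5
      rw [hcx, hcy, hcz]
      linear_combination h5
    have hcsum : cx + cy + cz = 0 := by rw [hcx, hcy, hcz]; ring
    rw [hcsum, hdot] at h0'
    linarith
  · rintro ⟨h1, h2⟩
    refine ⟨wmat ηAB ηAC ηBC, ?_, trace_w ηAB ηAC ηBC, fun U _ => comm_w ηAB ηAC ηBC U,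
      trC_w ηAB ηAC ηBC, trB_w ηAB ηAC ηBC, trA_w ηAB ηAC ηBC⟩
    have habs := habs2 ηAB ηAC ηBC
    set az : ℝ := ‖(ηAB : ℂ) + Complex.exp (2 * Real.pi * Complex.I / 3) * ηAC
          + Complex.exp (2 * Real.pi * Complex.I / 3) ^ 2 * ηBC‖ with haz
    have hz0 : 0 ≤ az := norm_nonneg _
    have ha : 0 ≤ (1 - (ηAB + ηAC + ηBC))/8 := by linarith
    have hm : 0 ≤ (1 + (ηAB + ηAC + ηBC))/8 := by linarith
    have hccle : az^2/16 ≤ ((1 - (ηAB + ηAC + ηBC))/8)^2 := by nlinarith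
    have hwG : wmat ηAB ηAC ηBC
        = Gm ηAB ηAC ηBC + (((1 + (ηAB + ηAC + ηBC))/24 : ℝ) : ℂ) • bigS := by
      rw [Gm]; abel
    rcases eq_or_lt_of_le ha with hae | hapos
    · -- boundary case a = 0
      have haz0 : az = 0 := le_antisymm (by linarith) hz0
      have hG2 : Gm ηAB ηAC ηBC * Gm ηAB ηAC ηBC = 0 := by
        rw [I1]
        have e1 : (2 * ((1 - (ηAB+ηAC+ηBC))/8) : ℝ) = 0 := by linarith
        have e2 : ((ηAB^2+ηAC^2+ηBC^2 - (ηAB*ηAC+ηAB*ηBC+ηAC*ηBC))/16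
            - ((1 - (ηAB+ηAC+ηBC))/8)^2 : ℝ) = 0 := by
          rw [← habs, haz0, ← hae]; ring
        rw [e1, e2]
        simp
      have hG0 : Gm ηAB ηAC ηBC = 0 := by
        have hh := herm_G ηAB ηAC ηBC
        rw [← Matrix.conjTranspose_mul_self_eq_zero (A := Gm ηAB ηAC ηBC), hh, hG2]
      rw [hwG, hG0, zero_add]
      exact psd_smul psd_S (by linarith)
    · -- interior case a > 0
      have hane : ((1 - (ηAB + ηAC + ηBC))/8 : ℝ) ≠ 0 := ne_of_gt hapos
      have hcc' : ((ηAB^2+ηAC^2+ηBC^2 - (ηAB*ηAC+ηAB*ηBC+ηAC*ηBC))/16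
          - ((1 - (ηAB+ηAC+ηBC))/8)^2 : ℝ)
          = az^2/16 - ((1 - (ηAB+ηAC+ηBC))/8)^2 := by rw [habs]
      have hscaledid : ((2*((1 - (ηAB + ηAC + ηBC))/8) : ℝ) : ℂ) • wmat ηAB ηAC ηBC
          = ((2*((1 - (ηAB + ηAC + ηBC))/8)*((1 + (ηAB + ηAC + ηBC))/8) : ℝ) : ℂ)
              • (((1/3 : ℝ) : ℂ) • bigS)
            + ((((1 - (ηAB + ηAC + ηBC))/8)^2 - az^2/16 : ℝ) : ℂ)
              • ((1 : Matrix Tri Tri ℂ) - ((1/3 : ℝ) : ℂ) • bigS)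
            + ((Gm ηAB ηAC ηBC)ᴴ * Gm ηAB ηAC ηBC) := by
        rw [herm_G, I1, hcc']
        have hsm : ((1/3 : ℝ) : ℂ) = (1/3 : ℂ) := by push_cast; ring
        rw [hsm]
        nth_rewrite 1 [hwG]
        match_scalars <;> push_cast <;> ring
      have hscaled : (((2*((1 - (ηAB + ηAC + ηBC))/8) : ℝ) : ℂ)
          • wmat ηAB ηAC ηBC).PosSemidef := by
        rw [hscaledid]
        refine psd_add (psd_add (psd_smul (psd_smul psd_S (by norm_num)) (by nlinarith))
          (psd_smul ?_ (by nlinarith))) (Matrix.posSemidef_conjTranspose_mul_self _)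
        have hQh : ((1 : Matrix Tri Tri ℂ) - ((1/3 : ℝ) : ℂ) • bigS)ᴴ
            = (1 : Matrix Tri Tri ℂ) - ((1/3 : ℝ) : ℂ) • bigS := by
          simp only [Matrix.conjTranspose_sub, Matrix.conjTranspose_smul,
            Matrix.conjTranspose_one, herm_S, Complex.star_def, Complex.conj_ofReal]
        have hq := Matrix.posSemidef_conjTranspose_mul_self
          ((1 : Matrix Tri Tri ℂ) - ((1/3 : ℝ) : ℂ) • bigS)
        rwa [hQh, Q2] at hq
      have hwid : wmat ηAB ηAC ηBC = ((1/(2*((1 - (ηAB + ηAC + ηBC))/8)) : ℝ) : ℂ)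
          • (((2*((1 - (ηAB + ηAC + ηBC))/8) : ℝ) : ℂ) • wmat ηAB ηAC ηBC) := by
        rw [smul_smul, ← Complex.ofReal_mul, one_div_mul_cancel (by positivity),
          Complex.ofReal_one, one_smul]
      rw [hwid]
      exact psd_smul hscaled (by positivity)
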